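/- arXiv:0812.3475 — 3 statements merged into one kernel-verified Lean document; each statement's English description precedes it below -/
import Mathlib

section
/- Let X and Y be metric spaces, let f, g : X → Y be maps that are close (i.e., sup_{x ∈ X} d(f x, g x) < ∞), with f metrically proper, and let φ : Y → ℂ be a Higson function on Y. Then φ ∘ f − φ ∘ g vanishes at infinity: for every ε > 0 there exists a bounded set B ⊆ X such that |φ(f x) − φ(g x)| < ε for all x ∉ B. -/
open Set Bornology

/-- A bounded continuous function `φ : Y → ℂ` is a *Higson function* if for every
`R > 0` and `ε > 0` there is a bounded set `B ⊆ Y` such that `|φ(y') − φ(y)| < ε`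
whenever `d(y, y') ≤ R` and `y ∉ B`. -/
def IsHigsonFunction {Y : Type*} [MetricSpace Y] (φ : Y → ℂ) : Prop :=
  Continuous φ ∧ IsBounded (Set.range φ) ∧
    ∀ R : ℝ, 0 < R → ∀ ε : ℝ, 0 < ε → ∃ B : Set Y, IsBounded B ∧
      ∀ y y' : Y, dist y y' ≤ R → y ∉ B → ‖φ y' - φ y‖ < ε

/-- If `f` and `g` are close maps with `f` metrically proper and `φ` is a Higson
function, then `φ ∘ f − φ ∘ g` vanishes at infinity. -/
theorem higson_comp_close_vanishes_at_infinity {X Y : Type*} [MetricSpace X] [MetricSpace Y]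
    (f g : X → Y) (hclose : ∃ C : ℝ, ∀ x : X, dist (f x) (g x) ≤ C)
    (hproper : ∀ D : Set Y, IsBounded D → IsBounded (f ⁻¹' D))
    (φ : Y → ℂ) (hφ : IsHigsonFunction φ) :
    ∀ ε : ℝ, 0 < ε → ∃ B : Set X, IsBounded B ∧
      ∀ x : X, x ∉ B → ‖φ (f x) - φ (g x)‖ < ε := by
  intro ε hε
  obtain ⟨C, hC⟩ := hclose
  obtain ⟨-, -, hH⟩ := hφ
  obtain ⟨B, hB, hBprop⟩ := hH (max C 1) (lt_of_lt_of_le one_pos (le_max_right _ _)) ε hε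
  refine ⟨f ⁻¹' B, hproper B hB, fun x hx => ?_⟩
  rw [norm_sub_rev]
  exact hBprop (f x) (g x) (le_trans (hC x) (le_max_left _ _)) hx
end

section
/- Identify the vertices of the rooted binary tree with finite Boolean strings (List Bool), a string x = (i₀, i₁, …, i_{n−1}) read little-endian (i₀ is the lowest digit), and equip them with the tree metric d(x, y) = length(x) + length(y) − 2·p(x, y), where p(x, y) is the length of the longest common prefix of x and y. Let succ denote binary increment on little-endian Boolean strings: flip the initial run of 1's (true's) to 0's and set the first 0 to 1; if x consists entirely of 1's then succ(x) has one more digit (0's followed by a final 1); succ of the empty string is (0), a single digit. Then for all strings x and y, d(succ(x), succ(y)) ≤ d(x, y) + 2. -/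
/-- The length of the longest common prefix of two Boolean strings. -/
def lcpLen : List Bool → List Bool → ℕ
  | a :: x, b :: y => if a = b then lcpLen x y + 1 else 0
  | _, _ => 0

/-- The tree metric on the rooted binary tree of finite Boolean strings:
`d(x, y) = length x + length y − 2·lcpLen x y` (valued in `ℤ`). -/
def treeDist (x y : List Bool) : ℤ :=
  (x.length : ℤ) + (y.length : ℤ) - 2 * (lcpLen x y : ℤ)

/-- Auxiliary binary increment on nonempty little-endian Boolean strings:
flip the initial run of `true`s to `false`s and set the first `false` to `true`;
a string of all `true`s gains one extra digit. -/
def succAux : List Bool → List Bool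
  | [] => [true]
  | false :: x => true :: x
  | true :: x => false :: succAux x

/-- Binary increment on little-endian Boolean strings; the empty string (the root `*`)
is sent to the single digit `(0)`. -/
def succStr (x : List Bool) : List Bool :=
  if x = [] then [false] else succAux x

lemma succAux_length (x : List Bool) : (succAux x).length ≤ x.length + 1 := by
  induction x with
  | nil => simp [succAux]
  | cons a x ih => cases a <;> simp [succAux] <;> omega

lemma treeDist_succAux_le (x : List Bool) :
    ∀ y, treeDist (succAux x) (succAux y) ≤ treeDist x y + 2 := by
  induction x with
  | nil =>
    intro y
    cases y with
    | nil => simp [succAux, treeDist, lcpLen]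
    | cons b y =>
      have := succAux_length y
      cases b <;> simp [succAux, treeDist, lcpLen] <;> omega
  | cons a x ih =>
    intro y
    cases y with
    | nil =>
      have := succAux_length x
      cases a <;> simp [succAux, treeDist, lcpLen] <;> omega
    | cons b y =>
      cases a <;> cases b
      · simp [succAux, treeDist, lcpLen]
      · have := succAux_length y
        simp [succAux, treeDist, lcpLen]
        omega
      · have := succAux_length x
        simp [succAux, treeDist, lcpLen]
        omega
      · have := ih y
        simp [succAux, treeDist, lcpLen] at *
        omega

/-- The adding machine on the binary tree is large-scale Lipschitz:
`d(succ x, succ y) ≤ d(x, y) + 2`. -/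
theorem treeDist_succStr_le (x y : List Bool) :
    treeDist (succStr x) (succStr y) ≤ treeDist x y + 2 := by
  unfold succStr
  split <;> split <;> subst_vars
  · simp [treeDist, lcpLen]
  · cases y with
    | nil => simp_all
    | cons b y =>
      have := succAux_length y
      cases b <;> simp [succAux, treeDist, lcpLen] <;> omega
  · cases x with
    | nil => simp_all
    | cons a x =>
      have := succAux_length x
      cases a <;> simp [succAux, treeDist, lcpLen] <;> omega
  · exact treeDist_succAux_le x y
end

section
/- Let σ : (ℕ → Bool) → (ℕ → Bool) be the binary odometer (adding machine): if x has some index with value false, let k be the least such index and define σ(x)(n) = false for n < k, σ(x)(k) = true, and σ(x)(n) = x(n) for n > k; if x is constantly true, define σ(x) to be constantly false. Then the action of ℕ on the Cantor space ℕ → Bool (with the product topology) generated by σ is minimal: for every x : ℕ → Bool, the forward orbit {σⁿ(x) : n ∈ ℕ} is dense in ℕ → Bool. -/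
open Set

/-- The binary odometer (adding machine) on Cantor space `ℕ → Bool`: if `x` has a
least index `k` with value `false`, flip all entries below `k` to `false`, set entry
`k` to `true`, and keep the rest; if `x` is constantly `true`, return the constantly
`false` sequence. -/
noncomputable def odometer (x : ℕ → Bool) : ℕ → Bool :=
  letI := Classical.dec (∃ k, x k = false)
  if h : ∃ k, x k = false then
    fun n => if n < Nat.find h then false else if n = Nat.find h then true else x n
  else fun _ => false

/-- Value of the first `m` bits, little-endian. -/
def pv (m : ℕ) (x : ℕ → Bool) : ℕ := ∑ i ∈ Finset.range m, (x i).toNat * 2 ^ i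

lemma pv_lt (m : ℕ) (x : ℕ → Bool) : pv m x < 2 ^ m := by
  induction m with
  | zero => simp [pv]
  | succ m ih =>
    have : pv (m + 1) x = pv m x + (x m).toNat * 2 ^ m := by
      simp [pv, Finset.sum_range_succ]
    rw [this, pow_succ]
    cases x m <;> simp <;> omega

lemma pv_allTrue (m : ℕ) (x : ℕ → Bool) (h : ∀ i < m, x i = true) :
    pv m x = 2 ^ m - 1 := by
  induction m with
  | zero => simp [pv]
  | succ m ih =>
    have h1 : pv (m + 1) x = pv m x + (x m).toNat * 2 ^ m := by
      simp [pv, Finset.sum_range_succ]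
    have h2 : pv m x = 2 ^ m - 1 := ih fun i hi => h i (by omega)
    have h3 : x m = true := h m (by omega)
    have h4 : 1 ≤ 2 ^ m := Nat.one_le_two_pow
    rw [h1, h2, h3, pow_succ]
    simp; omega

lemma pv_inj (m : ℕ) (a b : ℕ → Bool) (h : pv m a = pv m b) :
    ∀ i < m, a i = b i := by
  induction m with
  | zero => omega
  | succ m ih =>
    have ha : pv (m + 1) a = pv m a + (a m).toNat * 2 ^ m := by
      simp [pv, Finset.sum_range_succ]
    have hb : pv (m + 1) b = pv m b + (b m).toNat * 2 ^ m := by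
      simp [pv, Finset.sum_range_succ]
    have la := pv_lt m a
    have lb := pv_lt m b
    rw [ha, hb] at h
    have heq : a m = b m := by
      cases hma : a m <;> cases hmb : b m <;> simp_all <;> omega
    have hpv : pv m a = pv m b := by
      rw [heq] at h; omega
    intro i hi
    rcases Nat.lt_succ_iff_lt_or_eq.mp hi with hi' | rfl
    · exact ih hpv i hi'
    · exact heq

lemma odometer_spec (x : ℕ → Bool) (k : ℕ) (hk : x k = false)
    (hmin : ∀ j < k, x j = true) (n : ℕ) :
    odometer x n = if n < k then false else if n = k then true else x n := by
  have h : ∃ k, x k = false := ⟨k, hk⟩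
  classical
  have hfind : Nat.find h = k := by
    rw [Nat.find_eq_iff]
    exact ⟨hk, fun j hj => by simp [hmin j hj]⟩
  simp only [odometer]
  rw [dif_pos h, hfind]

lemma pv_odometer (m : ℕ) (x : ℕ → Bool) :
    pv m (odometer x) = (pv m x + 1) % 2 ^ m := by
  have h1 : (1 : ℕ) ≤ 2 ^ m := Nat.one_le_two_pow
  by_cases h : ∃ k, x k = false
  · classical
    set k := Nat.find h with hkdef
    have hk : x k = false := Nat.find_spec h
    have hmin' : ∀ j < k, x j = true := by
      intro j hj
      have := Nat.find_min h hj
      simpa using this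
    have hod := odometer_spec x k hk hmin'
    by_cases hkm : k < m
    · -- no wraparound within first m bits
      have key : pv m (odometer x) = pv m x + 1 := by
        have hsplit : ∀ y : ℕ → Bool, pv m y =
            (∑ i ∈ Finset.range (k + 1), (y i).toNat * 2 ^ i) +
            ∑ i ∈ Finset.Ico (k + 1) m, (y i).toNat * 2 ^ i := by
          intro y
          rw [pv, Finset.range_eq_Ico, ← Finset.sum_Ico_consecutive _ (Nat.zero_le _) (by omega : k + 1 ≤ m), Finset.range_eq_Ico]
        have htail : ∀ i ∈ Finset.Ico (k + 1) m,
            ((odometer x) i).toNat * 2 ^ i = (x i).toNat * 2 ^ i := by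
          intro i hi
          simp only [Finset.mem_Ico] at hi
          rw [hod i, if_neg (by omega), if_neg (by omega)]
        have hhead : (∑ i ∈ Finset.range (k + 1), ((odometer x) i).toNat * 2 ^ i) = 2 ^ k := by
          rw [Finset.sum_range_succ, hod k, if_neg (lt_irrefl k), if_pos rfl]
          have : ∀ i ∈ Finset.range k, ((odometer x) i).toNat * 2 ^ i = 0 := by
            intro i hi
            simp only [Finset.mem_range] at hi
            rw [hod i, if_pos hi]; simp
          rw [Finset.sum_congr rfl this]
          simp
        have hheadx : (∑ i ∈ Finset.range (k + 1), (x i).toNat * 2 ^ i) = 2 ^ k - 1 := by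
          rw [Finset.sum_range_succ, hk]
          have : (∑ i ∈ Finset.range k, (x i).toNat * 2 ^ i) = pv k x := rfl
          rw [this, pv_allTrue k x hmin']
          simp
        rw [hsplit, hsplit, Finset.sum_congr rfl htail, hhead, hheadx]
        have : (1:ℕ) ≤ 2 ^ k := Nat.one_le_two_pow
        omega
      rw [key, Nat.mod_eq_of_lt]
      rw [← key]
      exact pv_lt m (odometer x)
    · -- k ≥ m : first m bits all true, become all false
      push_neg at hkm
      have hx : pv m x = 2 ^ m - 1 := pv_allTrue m x fun i hi => hmin' i (by omega)
      have hod0 : pv m (odometer x) = 0 := by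
        rw [pv]
        apply Finset.sum_eq_zero
        intro i hi
        simp only [Finset.mem_range] at hi
        rw [hod i, if_pos (by omega)]; simp
      rw [hod0, hx, Nat.sub_add_cancel h1, Nat.mod_self]
  · -- constantly true
    push_neg at h
    have hx : pv m x = 2 ^ m - 1 := pv_allTrue m x fun i _ => by
      have := h i; simpa using this
    have hod0 : pv m (odometer x) = 0 := by
      have : odometer x = fun _ => false := by
        simp only [odometer]
        rw [dif_neg (by push_neg; exact fun k => by have := h k; simpa using this)]
      rw [this, pv]; simp
    rw [hod0, hx, Nat.sub_add_cancel h1, Nat.mod_self]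

lemma pv_iterate (m n : ℕ) (x : ℕ → Bool) :
    pv m (odometer^[n] x) = (pv m x + n) % 2 ^ m := by
  induction n with
  | zero => simp [Nat.mod_eq_of_lt (pv_lt m x)]
  | succ n ih =>
    rw [Function.iterate_succ_apply', pv_odometer, ih, Nat.mod_add_mod, ← add_assoc]

/-- The odometer action of `ℕ` on Cantor space (with the product topology) is
minimal: every forward orbit is dense. -/
theorem odometer_orbit_dense (x : ℕ → Bool) :
    Dense (Set.range fun n : ℕ => odometer^[n] x) := by
  rw [dense_iff_inter_open]
  intro U hU ⟨y, hy⟩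
  obtain ⟨I, u, h1, h2⟩ := isOpen_pi_iff.mp hU y hy
  set m := I.sup id + 1 with hm
  have hpx := pv_lt m x
  have hpy := pv_lt m y
  set n := 2 ^ m + pv m y - pv m x with hn
  have hpv : pv m (odometer^[n] x) = pv m y := by
    rw [pv_iterate]
    have : pv m x + n = 2 ^ m + pv m y := by omega
    rw [this, Nat.add_mod_left, Nat.mod_eq_of_lt hpy]
  have hagree : ∀ i < m, odometer^[n] x i = y i := pv_inj m _ _ hpv
  refine ⟨odometer^[n] x, h2 ?_, ⟨n, rfl⟩⟩
  intro i hi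
  have him : i < m := by
    have : i ≤ I.sup id := Finset.le_sup (f := id) hi
    omega
  rw [hagree i him]
  exact (h1 i hi).2
end
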